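/- Under the hypotheses of the construction, there exists a unique continuous function f ∈ C(E) satisfying the self-affinity functional equation f(x,y) = s_{ij}(x,y)·(f(L_{ij}⁻¹(x,y)) − g_{ij}(L_{ij}⁻¹(x,y))) + h_{ij}(x,y) for all (x,y) ∈ E_{ij} and all (i,j); moreover f interpolates the data: f(x_i, y_j) = z_{ij} for all grid points. -/

import Mathlib

open Set

private lemma fit_exists {n : ℕ} (hn : 0 < n) {x : Fin (n + 1) → ℝ} (hx : Monotone x)
    {t : ℝ} (ht : t ∈ Icc (x 0) (x (Fin.last n))) :
    ∃ i : Fin n, t ∈ Icc (x i.castSucc) (x i.succ) := by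
  classical
  set A : Finset (Fin n) := Finset.univ.filter (fun i => x i.castSucc ≤ t) with hA
  have hA0 : (⟨0, hn⟩ : Fin n) ∈ A := by
    simp only [hA, Finset.mem_filter, Finset.mem_univ, true_and]
    exact ht.1
  have hAne : A.Nonempty := ⟨_, hA0⟩
  set i := A.max' hAne with hi
  have hmem : i ∈ A := A.max'_mem hAne
  have h1 : x i.castSucc ≤ t := by
    simpa only [hA, Finset.mem_filter, Finset.mem_univ, true_and] using hmem
  refine ⟨i, h1, ?_⟩
  by_contra hlt
  push_neg at hlt
  by_cases hin : (i : ℕ) + 1 < n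
  · have hmem' : (⟨(i : ℕ) + 1, hin⟩ : Fin n) ∈ A := by
      simp only [hA, Finset.mem_filter, Finset.mem_univ, true_and]
      have : (⟨(i : ℕ) + 1, hin⟩ : Fin n).castSucc = i.succ := by
        apply Fin.ext; simp
      rw [this]
      exact hlt.le
    have hle := A.le_max' _ hmem'
    rw [← hi] at hle
    have := Fin.le_def.mp hle
    simp at this
  · have hin' : (i : ℕ) + 1 = n := by
      have := i.isLt; omega
    have hlast : i.succ = Fin.last n := by
      apply Fin.ext; simp [hin']
    rw [hlast] at hlt
    exact absurd ht.2 (not_le.mpr hlt)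

private lemma fit_edge {n : ℕ} {x : Fin (n + 1) → ℝ} (hx : StrictMono x)
    {α : Fin (n + 1)} {i : Fin n} (h1 : x i.castSucc ≤ x α) (h2 : x α ≤ x i.succ) :
    α = i.castSucc ∨ α = i.succ := by
  have l1 : i.castSucc ≤ α := hx.le_iff_le.mp h1
  have l2 : α ≤ i.succ := hx.le_iff_le.mp h2
  rw [Fin.le_def] at l1 l2
  simp only [Fin.coe_castSucc, Fin.val_succ] at l1 l2
  rcases Nat.lt_or_ge (α : ℕ) ((i : ℕ) + 1) with hl | hl
  · left; apply Fin.ext; simp only [Fin.coe_castSucc]; omega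
  · right; apply Fin.ext; simp only [Fin.val_succ]; omega

private lemma fit_overlap {n : ℕ} {x : Fin (n + 1) → ℝ} (hx : StrictMono x)
    {i k : Fin n} (hik : i ≠ k) {t : ℝ}
    (h1 : t ∈ Icc (x i.castSucc) (x i.succ)) (h2 : t ∈ Icc (x k.castSucc) (x k.succ)) :
    ∃ α : Fin (n + 1), t = x α ∧ (α = i.castSucc ∨ α = i.succ) ∧
      (α = k.castSucc ∨ α = k.succ) := by
  rcases lt_or_gt_of_ne hik with hlt | hlt
  · have hle : (i.succ : Fin (n + 1)) ≤ k.castSucc := by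
      rw [Fin.le_def]
      simp only [Fin.val_succ, Fin.coe_castSucc]
      exact Fin.lt_def.mp hlt
    have hxle : x i.succ ≤ x k.castSucc := hx.monotone hle
    have e1 : t = x i.succ := le_antisymm h1.2 (hxle.trans h2.1)
    have e2 : k.castSucc = i.succ := hx.injective (le_antisymm (h2.1.trans h1.2) hxle)
    exact ⟨i.succ, e1, Or.inr rfl, Or.inl e2.symm⟩
  · have hle : (k.succ : Fin (n + 1)) ≤ i.castSucc := by
      rw [Fin.le_def]
      simp only [Fin.val_succ, Fin.coe_castSucc]
      exact Fin.lt_def.mp hlt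
    have hxle : x k.succ ≤ x i.castSucc := hx.monotone hle
    have e1 : t = x k.succ := le_antisymm h2.2 (hxle.trans h1.1)
    have e2 : i.castSucc = k.succ := hx.injective (le_antisymm (h1.1.trans h2.2) hxle)
    exact ⟨k.succ, e1, Or.inl e2.symm, Or.inr rfl⟩

theorem exists_unique_fractal_interpolation_function (n m : ℕ) (hn : 0 < n) (hm : 0 < m)
    (x : Fin (n + 1) → ℝ) (y : Fin (m + 1) → ℝ)
    (hx : StrictMono x) (hy : StrictMono y)
    (z : Fin (n + 1) → Fin (m + 1) → ℝ)
    -- the horizontal and vertical contraction homeomorphisms and their inverses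
    (Lx Lx' : Fin n → ℝ → ℝ) (Ly Ly' : Fin m → ℝ → ℝ)
    (hLxmap : ∀ i, MapsTo (Lx i) (Icc (x 0) (x (Fin.last n)))
      (Icc (x i.castSucc) (x i.succ)))
    (hLx'map : ∀ i, MapsTo (Lx' i) (Icc (x i.castSucc) (x i.succ))
      (Icc (x 0) (x (Fin.last n))))
    (hLxinv : ∀ i, ∀ t ∈ Icc (x 0) (x (Fin.last n)), Lx' i (Lx i t) = t)
    (hLxinv' : ∀ i, ∀ t ∈ Icc (x i.castSucc) (x i.succ), Lx i (Lx' i t) = t)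
    (hLxcont : ∀ i, ContinuousOn (Lx i) (Icc (x 0) (x (Fin.last n))))
    (hLx'cont : ∀ i, ContinuousOn (Lx' i) (Icc (x i.castSucc) (x i.succ)))
    (hLxcontr : ∀ i, ∃ c : ℝ, c < 1 ∧ ∀ t ∈ Icc (x 0) (x (Fin.last n)),
      ∀ t' ∈ Icc (x 0) (x (Fin.last n)), |Lx i t - Lx i t'| ≤ c * |t - t'|)
    (hLxend : ∀ i, (Lx i (x 0) = x i.castSucc ∧ Lx i (x (Fin.last n)) = x i.succ) ∨
      (Lx i (x 0) = x i.succ ∧ Lx i (x (Fin.last n)) = x i.castSucc))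
    (hLymap : ∀ j, MapsTo (Ly j) (Icc (y 0) (y (Fin.last m)))
      (Icc (y j.castSucc) (y j.succ)))
    (hLy'map : ∀ j, MapsTo (Ly' j) (Icc (y j.castSucc) (y j.succ))
      (Icc (y 0) (y (Fin.last m))))
    (hLyinv : ∀ j, ∀ t ∈ Icc (y 0) (y (Fin.last m)), Ly' j (Ly j t) = t)
    (hLyinv' : ∀ j, ∀ t ∈ Icc (y j.castSucc) (y j.succ), Ly j (Ly' j t) = t)
    (hLycont : ∀ j, ContinuousOn (Ly j) (Icc (y 0) (y (Fin.last m))))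
    (hLy'cont : ∀ j, ContinuousOn (Ly' j) (Icc (y j.castSucc) (y j.succ)))
    (hLycontr : ∀ j, ∃ c : ℝ, c < 1 ∧ ∀ t ∈ Icc (y 0) (y (Fin.last m)),
      ∀ t' ∈ Icc (y 0) (y (Fin.last m)), |Ly j t - Ly j t'| ≤ c * |t - t'|)
    (hLyend : ∀ j, (Ly j (y 0) = y j.castSucc ∧ Ly j (y (Fin.last m)) = y j.succ) ∨
      (Ly j (y 0) = y j.succ ∧ Ly j (y (Fin.last m)) = y j.castSucc))
    -- vertical scaling factors, Lipschitz, |s| < 1, vanishing on ∂E_{ij}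
    (s : Fin n → Fin m → ℝ × ℝ → ℝ)
    (hslip : ∀ i j, ∃ K : NNReal, LipschitzOnWith K (s i j)
      (Icc (x i.castSucc) (x i.succ) ×ˢ Icc (y j.castSucc) (y j.succ)))
    (hs1 : ∀ i j, ∀ p ∈ Icc (x i.castSucc) (x i.succ) ×ˢ Icc (y j.castSucc) (y j.succ),
      |s i j p| < 1)
    (hsbdx : ∀ i j, ∀ b ∈ Icc (y j.castSucc) (y j.succ),
      s i j (x i.castSucc, b) = 0 ∧ s i j (x i.succ, b) = 0)
    (hsbdy : ∀ i j, ∀ a ∈ Icc (x i.castSucc) (x i.succ),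
      s i j (a, y j.castSucc) = 0 ∧ s i j (a, y j.succ) = 0)
    -- the Lipschitz functions g_{ij} on E
    (g : Fin n → Fin m → ℝ × ℝ → ℝ)
    (hglip : ∀ i j, ∃ K : NNReal, LipschitzOnWith K (g i j)
      (Icc (x 0) (x (Fin.last n)) ×ˢ Icc (y 0) (y (Fin.last m))))
    -- interpolation curves q_α, r_β of the column/row data
    (q : Fin (n + 1) → ℝ → ℝ) (r : Fin (m + 1) → ℝ → ℝ)
    (hqcont : ∀ α, ContinuousOn (q α) (Icc (y 0) (y (Fin.last m))))
    (hrcont : ∀ β, ContinuousOn (r β) (Icc (x 0) (x (Fin.last n))))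
    (hqdata : ∀ α β, q α (y β) = z α β) (hrdata : ∀ α β, r β (x α) = z α β)
    -- the Lipschitz functions h_{ij} with prescribed boundary curves
    (h : Fin n → Fin m → ℝ × ℝ → ℝ)
    (hhlip : ∀ i j, ∃ K : NNReal, LipschitzOnWith K (h i j)
      (Icc (x i.castSucc) (x i.succ) ×ˢ Icc (y j.castSucc) (y j.succ)))
    (hhq : ∀ i j, ∀ b ∈ Icc (y j.castSucc) (y j.succ),
      h i j (x i.castSucc, b) = q i.castSucc b ∧ h i j (x i.succ, b) = q i.succ b)
    (hhr : ∀ i j, ∀ a ∈ Icc (x i.castSucc) (x i.succ),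
      h i j (a, y j.castSucc) = r j.castSucc a ∧ h i j (a, y j.succ) = r j.succ a)
    -- corner data matching for the boundary curves
    (hqz0 : ∀ α β, q α (y β) = z α β) :
    ∃ f : ℝ × ℝ → ℝ,
      (ContinuousOn f (Icc (x 0) (x (Fin.last n)) ×ˢ Icc (y 0) (y (Fin.last m))) ∧
        (∀ α, ∀ b ∈ Icc (y 0) (y (Fin.last m)), f (x α, b) = q α b) ∧
        (∀ β, ∀ a ∈ Icc (x 0) (x (Fin.last n)), f (a, y β) = r β a)) ∧
      (∀ i j, ∀ p ∈ Icc (x i.castSucc) (x i.succ) ×ˢ Icc (y j.castSucc) (y j.succ),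
        f p = s i j p * (f (Lx' i p.1, Ly' j p.2) - g i j (Lx' i p.1, Ly' j p.2)) +
          h i j p) ∧
      (∀ α β, f (x α, y β) = z α β) ∧
      (∀ f' : ℝ × ℝ → ℝ,
        (ContinuousOn f' (Icc (x 0) (x (Fin.last n)) ×ˢ Icc (y 0) (y (Fin.last m))) ∧
          (∀ α, ∀ b ∈ Icc (y 0) (y (Fin.last m)), f' (x α, b) = q α b) ∧
          (∀ β, ∀ a ∈ Icc (x 0) (x (Fin.last n)), f' (a, y β) = r β a)) →
        (∀ i j, ∀ p ∈ Icc (x i.castSucc) (x i.succ) ×ˢ Icc (y j.castSucc) (y j.succ),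
          f' p = s i j p * (f' (Lx' i p.1, Ly' j p.2) - g i j (Lx' i p.1, Ly' j p.2)) +
            h i j p) →
        EqOn f f' (Icc (x 0) (x (Fin.last n)) ×ˢ Icc (y 0) (y (Fin.last m)))) := by
  classical
  -- basic membership facts
  have hxm : ∀ α : Fin (n + 1), x α ∈ Icc (x 0) (x (Fin.last n)) :=
    fun α => ⟨hx.monotone (Fin.zero_le α), hx.monotone (Fin.le_last α)⟩
  have hym : ∀ β : Fin (m + 1), y β ∈ Icc (y 0) (y (Fin.last m)) :=
    fun β => ⟨hy.monotone (Fin.zero_le β), hy.monotone (Fin.le_last β)⟩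
  have hsubx : ∀ (i : Fin n) (t : ℝ), t ∈ Icc (x i.castSucc) (x i.succ) →
      t ∈ Icc (x 0) (x (Fin.last n)) :=
    fun i t ht => ⟨(hxm i.castSucc).1.trans ht.1, ht.2.trans (hxm i.succ).2⟩
  have hsuby : ∀ (j : Fin m) (t : ℝ), t ∈ Icc (y j.castSucc) (y j.succ) →
      t ∈ Icc (y 0) (y (Fin.last m)) :=
    fun j t ht => ⟨(hym j.castSucc).1.trans ht.1, ht.2.trans (hym j.succ).2⟩
  -- choice of subinterval index
  have hixE : ∀ t : ℝ, ∃ i : Fin n, t ∈ Icc (x 0) (x (Fin.last n)) →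
      t ∈ Icc (x i.castSucc) (x i.succ) := by
    intro t
    by_cases ht : t ∈ Icc (x 0) (x (Fin.last n))
    · obtain ⟨i, hi⟩ := fit_exists hn hx.monotone ht
      exact ⟨i, fun _ => hi⟩
    · exact ⟨⟨0, hn⟩, fun hc => absurd hc ht⟩
  have hiyE : ∀ t : ℝ, ∃ j : Fin m, t ∈ Icc (y 0) (y (Fin.last m)) →
      t ∈ Icc (y j.castSucc) (y j.succ) := by
    intro t
    by_cases ht : t ∈ Icc (y 0) (y (Fin.last m))
    · obtain ⟨j, hj⟩ := fit_exists hm hy.monotone ht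
      exact ⟨j, fun _ => hj⟩
    · exact ⟨⟨0, hm⟩, fun hc => absurd hc ht⟩
  choose ix hix using hixE
  choose iy hiy using hiyE
  -- the rectangle maps
  set F : Fin n → Fin m → (ℝ × ℝ → ℝ) → ℝ × ℝ → ℝ :=
    fun i j f p => s i j p * (f (Lx' i p.1, Ly' j p.2) - g i j (Lx' i p.1, Ly' j p.2)) + h i j p
    with hFdef
  -- agreement of the rectangle maps on overlaps (for arbitrary f)
  have hFagree : ∀ (f : ℝ × ℝ → ℝ) (i₁ i₂ : Fin n) (j₁ j₂ : Fin m) (p : ℝ × ℝ),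
      p.1 ∈ Icc (x i₁.castSucc) (x i₁.succ) → p.2 ∈ Icc (y j₁.castSucc) (y j₁.succ) →
      p.1 ∈ Icc (x i₂.castSucc) (x i₂.succ) → p.2 ∈ Icc (y j₂.castSucc) (y j₂.succ) →
      F i₁ j₁ f p = F i₂ j₂ f p := by
    intro f i₁ i₂ j₁ j₂ p hp1 hp2 hp3 hp4
    obtain ⟨a, b⟩ := p
    simp only at hp1 hp2 hp3 hp4
    by_cases hi : i₁ = i₂
    · subst hi
      by_cases hj : j₁ = j₂
      · subst hj; rfl
      · obtain ⟨β, hbeq, hβ1, hβ2⟩ := fit_overlap hy hj hp2 hp4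
        subst hbeq
        have hs01 : s i₁ j₁ (a, y β) = 0 := by
          rcases hβ1 with h' | h' <;> subst h'
          · exact (hsbdy i₁ j₁ a hp1).1
          · exact (hsbdy i₁ j₁ a hp1).2
        have hs02 : s i₁ j₂ (a, y β) = 0 := by
          rcases hβ2 with h' | h' <;> subst h'
          · exact (hsbdy i₁ j₂ a hp3).1
          · exact (hsbdy i₁ j₂ a hp3).2
        have hh1 : h i₁ j₁ (a, y β) = r β a := by
          rcases hβ1 with h' | h' <;> subst h'
          · exact (hhr i₁ j₁ a hp1).1
          · exact (hhr i₁ j₁ a hp1).2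
        have hh2 : h i₁ j₂ (a, y β) = r β a := by
          rcases hβ2 with h' | h' <;> subst h'
          · exact (hhr i₁ j₂ a hp3).1
          · exact (hhr i₁ j₂ a hp3).2
        simp only [hFdef, hs01, hs02, hh1, hh2, zero_mul, zero_add]
    · obtain ⟨α, haeq, hα1, hα2⟩ := fit_overlap hx hi hp1 hp3
      subst haeq
      have hs01 : s i₁ j₁ (x α, b) = 0 := by
        rcases hα1 with h' | h' <;> subst h'
        · exact (hsbdx i₁ j₁ b hp2).1
        · exact (hsbdx i₁ j₁ b hp2).2
      have hs02 : s i₂ j₂ (x α, b) = 0 := by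
        rcases hα2 with h' | h' <;> subst h'
        · exact (hsbdx i₂ j₂ b hp4).1
        · exact (hsbdx i₂ j₂ b hp4).2
      have hh1 : h i₁ j₁ (x α, b) = q α b := by
        rcases hα1 with h' | h' <;> subst h'
        · exact (hhq i₁ j₁ b hp2).1
        · exact (hhq i₁ j₁ b hp2).2
      have hh2 : h i₂ j₂ (x α, b) = q α b := by
        rcases hα2 with h' | h' <;> subst h'
        · exact (hhq i₂ j₂ b hp4).1
        · exact (hhq i₂ j₂ b hp4).2
      simp only [hFdef, hs01, hs02, hh1, hh2, zero_mul, zero_add]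
  -- boundary values of the rectangle maps
  have hTbcq : ∀ (f : ℝ × ℝ → ℝ) (i : Fin n) (j : Fin m) (α : Fin (n + 1)) (b : ℝ),
      x α ∈ Icc (x i.castSucc) (x i.succ) → b ∈ Icc (y j.castSucc) (y j.succ) →
      F i j f (x α, b) = q α b := by
    intro f i j α b ha hb
    rcases fit_edge hx ha.1 ha.2 with h' | h' <;> subst h'
    · simp only [hFdef, (hsbdx i j b hb).1, (hhq i j b hb).1, zero_mul, zero_add]
    · simp only [hFdef, (hsbdx i j b hb).2, (hhq i j b hb).2, zero_mul, zero_add]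
  have hTbcr : ∀ (f : ℝ × ℝ → ℝ) (i : Fin n) (j : Fin m) (β : Fin (m + 1)) (a : ℝ),
      a ∈ Icc (x i.castSucc) (x i.succ) → y β ∈ Icc (y j.castSucc) (y j.succ) →
      F i j f (a, y β) = r β a := by
    intro f i j β a ha hb
    rcases fit_edge hy hb.1 hb.2 with h' | h' <;> subst h'
    · simp only [hFdef, (hsbdy i j a ha).1, (hhr i j a ha).1, zero_mul, zero_add]
    · simp only [hFdef, (hsbdy i j a ha).2, (hhr i j a ha).2, zero_mul, zero_add]
  -- continuity of the rectangle maps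
  have hFcont : ∀ (f : ℝ × ℝ → ℝ),
      ContinuousOn f (Icc (x 0) (x (Fin.last n)) ×ˢ Icc (y 0) (y (Fin.last m))) →
      ∀ (i : Fin n) (j : Fin m), ContinuousOn (F i j f)
        (Icc (x i.castSucc) (x i.succ) ×ˢ Icc (y j.castSucc) (y j.succ)) := by
    intro f hf i j
    have hmapsΦ : MapsTo (fun p : ℝ × ℝ => (Lx' i p.1, Ly' j p.2))
        (Icc (x i.castSucc) (x i.succ) ×ˢ Icc (y j.castSucc) (y j.succ))
        (Icc (x 0) (x (Fin.last n)) ×ˢ Icc (y 0) (y (Fin.last m))) :=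
      fun p hp => ⟨hLx'map i hp.1, hLy'map j hp.2⟩
    have hΦ : ContinuousOn (fun p : ℝ × ℝ => (Lx' i p.1, Ly' j p.2))
        (Icc (x i.castSucc) (x i.succ) ×ˢ Icc (y j.castSucc) (y j.succ)) :=
      ((hLx'cont i).comp continuous_fst.continuousOn fun p hp => hp.1).prodMk
        ((hLy'cont j).comp continuous_snd.continuousOn fun p hp => hp.2)
    have hscont : ContinuousOn (s i j)
        (Icc (x i.castSucc) (x i.succ) ×ˢ Icc (y j.castSucc) (y j.succ)) :=
      (hslip i j).choose_spec.continuousOn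
    have hgcont : ContinuousOn (g i j)
        (Icc (x 0) (x (Fin.last n)) ×ˢ Icc (y 0) (y (Fin.last m))) :=
      (hglip i j).choose_spec.continuousOn
    have hhcont : ContinuousOn (h i j)
        (Icc (x i.castSucc) (x i.succ) ×ˢ Icc (y j.castSucc) (y j.succ)) :=
      (hhlip i j).choose_spec.continuousOn
    have h1 : ContinuousOn (fun p : ℝ × ℝ => f (Lx' i p.1, Ly' j p.2))
        (Icc (x i.castSucc) (x i.succ) ×ˢ Icc (y j.castSucc) (y j.succ)) :=
      hf.comp hΦ hmapsΦ
    have h2 : ContinuousOn (fun p : ℝ × ℝ => g i j (Lx' i p.1, Ly' j p.2))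
        (Icc (x i.castSucc) (x i.succ) ×ˢ Icc (y j.castSucc) (y j.succ)) :=
      hgcont.comp hΦ hmapsΦ
    rw [hFdef]
    exact (hscont.mul (h1.sub h2)).add hhcont
  -- the uniform contraction factor
  have hcmax : ∀ (i : Fin n) (j : Fin m), ∃ c : ℝ, 0 ≤ c ∧ c < 1 ∧
      ∀ p ∈ Icc (x i.castSucc) (x i.succ) ×ˢ Icc (y j.castSucc) (y j.succ),
        |s i j p| ≤ c := by
    intro i j
    have hK : IsCompact (Icc (x i.castSucc) (x i.succ) ×ˢ Icc (y j.castSucc) (y j.succ)) :=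
      isCompact_Icc.prod isCompact_Icc
    have hne : (Icc (x i.castSucc) (x i.succ) ×ˢ Icc (y j.castSucc) (y j.succ)).Nonempty :=
      ⟨(x i.castSucc, y j.castSucc),
        ⟨⟨le_rfl, hx.monotone (Fin.castSucc_lt_succ (i := i)).le⟩,
         ⟨le_rfl, hy.monotone (Fin.castSucc_lt_succ (i := j)).le⟩⟩⟩
    have hcont : ContinuousOn (fun p => |s i j p|)
        (Icc (x i.castSucc) (x i.succ) ×ˢ Icc (y j.castSucc) (y j.succ)) :=
      (hslip i j).choose_spec.continuousOn.abs
    obtain ⟨p₀, hp₀, hmax⟩ := hK.exists_isMaxOn hne hcont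
    exact ⟨|s i j p₀|, abs_nonneg _, hs1 i j p₀ hp₀, fun p hp => hmax hp⟩
  choose c hc0 hc1 hcb using hcmax
  obtain ⟨σ, hσ0, hσ1, hσb⟩ : ∃ σ : ℝ, 0 ≤ σ ∧ σ < 1 ∧ ∀ (i : Fin n) (j : Fin m), c i j ≤ σ := by
    have hne : (Finset.univ : Finset (Fin n × Fin m)).Nonempty :=
      ⟨(⟨0, hn⟩, ⟨0, hm⟩), Finset.mem_univ _⟩
    refine ⟨Finset.univ.sup' hne (fun ij => c ij.1 ij.2), ?_, ?_, ?_⟩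
    · exact (hc0 ⟨0, hn⟩ ⟨0, hm⟩).trans
        (Finset.le_sup' (fun ij : Fin n × Fin m => c ij.1 ij.2)
          (Finset.mem_univ (⟨0, hn⟩, ⟨0, hm⟩)))
    · exact (Finset.sup'_lt_iff hne).mpr fun ij _ => hc1 ij.1 ij.2
    · intro i j
      exact Finset.le_sup' (fun ij : Fin n × Fin m => c ij.1 ij.2) (Finset.mem_univ (i, j))
  -- the ambient space
  set E : Set (ℝ × ℝ) := Icc (x 0) (x (Fin.last n)) ×ˢ Icc (y 0) (y (Fin.last m)) with hEdef
  have hEco : IsCompact E := isCompact_Icc.prod isCompact_Icc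
  haveI : CompactSpace E := isCompact_iff_compactSpace.mp hEco
  haveI : Nonempty E := ⟨⟨(x 0, y 0), ⟨hxm 0, hym 0⟩⟩⟩
  -- extension of continuous maps on E to raw functions
  set ext : C(E, ℝ) → ℝ × ℝ → ℝ := fun φ p => if hp : p ∈ E then φ ⟨p, hp⟩ else 0 with hextdef
  have hexteq : ∀ (φ : C(E, ℝ)) (p : ℝ × ℝ) (hp : p ∈ E), ext φ p = φ ⟨p, hp⟩ :=
    fun φ p hp => dif_pos hp
  have hextcont : ∀ φ : C(E, ℝ), ContinuousOn (ext φ) E := by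
    intro φ
    rw [continuousOn_iff_continuous_restrict]
    have : E.domRestrict (ext φ) = φ := funext fun p => by
      rw [Set.restrict_apply, hexteq φ p p.2]
    rw [this]
    exact φ.continuous
  -- the raw operator
  set Traw : (ℝ × ℝ → ℝ) → ℝ × ℝ → ℝ := fun f p => F (ix p.1) (iy p.2) f p with hTrawdef
  have hTrawcont : ∀ f : ℝ × ℝ → ℝ, ContinuousOn f E → ContinuousOn (Traw f) E := by
    intro f hf
    have hcover : E = ⋃ ij : Fin n × Fin m,
        Icc (x ij.1.castSucc) (x ij.1.succ) ×ˢ Icc (y ij.2.castSucc) (y ij.2.succ) := by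
      apply Subset.antisymm
      · rintro ⟨a, b⟩ hp
        rcases fit_exists hn hx.monotone hp.1 with ⟨i, hi⟩
        rcases fit_exists hm hy.monotone hp.2 with ⟨j, hj⟩
        exact mem_iUnion.mpr ⟨(i, j), ⟨hi, hj⟩⟩
      · rintro ⟨a, b⟩ hp
        rcases mem_iUnion.mp hp with ⟨ij, hij⟩
        exact ⟨hsubx ij.1 a hij.1, hsuby ij.2 b hij.2⟩
    rw [hcover]
    refine (locallyFinite_of_finite _).continuousOn_iUnion
      (fun ij => (isClosed_Icc.prod isClosed_Icc)) ?_
    intro ij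
    refine (hFcont f hf ij.1 ij.2).congr ?_
    intro p hp
    show Traw f p = F ij.1 ij.2 f p
    rw [hTrawdef]
    exact hFagree f (ix p.1) ij.1 (iy p.2) ij.2 p
      (hix p.1 (hsubx ij.1 p.1 hp.1)) (hiy p.2 (hsuby ij.2 p.2 hp.2)) hp.1 hp.2
  -- the operator on the function space
  have hTcont : ∀ φ : C(E, ℝ), Continuous (fun p : E => Traw (ext φ) ↑p) := fun φ =>
    continuousOn_iff_continuous_restrict.mp (hTrawcont (ext φ) (hextcont φ))
  set T : C(E, ℝ) → C(E, ℝ) := fun φ => ⟨fun p => Traw (ext φ) ↑p, hTcont φ⟩ with hTdef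
  -- the contraction property
  set σn : NNReal := ⟨σ, hσ0⟩ with hσndef
  have hT_lip : LipschitzWith σn T := by
    apply LipschitzWith.of_dist_le_mul
    intro φ ψ
    have hC : (0 : ℝ) ≤ ↑σn * dist φ ψ := mul_nonneg σn.coe_nonneg dist_nonneg
    rw [ContinuousMap.dist_le hC]
    rintro ⟨pp, hp⟩
    simp only [hTdef, ContinuousMap.coe_mk]
    have hia := hix pp.1 hp.1
    have hjb := hiy pp.2 hp.2
    have hw : (Lx' (ix pp.1) pp.1, Ly' (iy pp.2) pp.2) ∈ E :=
      ⟨hLx'map _ hia, hLy'map _ hjb⟩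
    simp only [hTrawdef, hFdef]
    rw [hexteq φ _ hw, hexteq ψ _ hw, Real.dist_eq]
    set A := φ (⟨(Lx' (ix pp.1) pp.1, Ly' (iy pp.2) pp.2), hw⟩ : E) with hA
    set B := ψ (⟨(Lx' (ix pp.1) pp.1, Ly' (iy pp.2) pp.2), hw⟩ : E) with hB
    have harr : s (ix pp.1) (iy pp.2) pp *
          (A - g (ix pp.1) (iy pp.2) (Lx' (ix pp.1) pp.1, Ly' (iy pp.2) pp.2)) +
          h (ix pp.1) (iy pp.2) pp -
        (s (ix pp.1) (iy pp.2) pp *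
          (B - g (ix pp.1) (iy pp.2) (Lx' (ix pp.1) pp.1, Ly' (iy pp.2) pp.2)) +
          h (ix pp.1) (iy pp.2) pp) = s (ix pp.1) (iy pp.2) pp * (A - B) := by ring
    rw [harr, abs_mul]
    have h1 : |s (ix pp.1) (iy pp.2) pp| ≤ σ :=
      (hcb (ix pp.1) (iy pp.2) pp ⟨hia, hjb⟩).trans (hσb _ _)
    have h2 : |A - B| ≤ dist φ ψ := by
      rw [← Real.dist_eq]
      exact ContinuousMap.dist_apply_le_dist _
    calc |s (ix pp.1) (iy pp.2) pp| * |A - B| ≤ σ * dist φ ψ :=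
          mul_le_mul h1 h2 (abs_nonneg _) hσ0
      _ = ↑σn * dist φ ψ := rfl
  have hσn1 : σn < 1 := by
    rw [← NNReal.coe_lt_coe, NNReal.coe_one]
    exact hσ1
  have hcontr : ContractingWith σn T := ⟨hσn1, hT_lip⟩
  -- the fixed point
  set φ₀ : C(E, ℝ) := ContractingWith.fixedPoint T hcontr with hφ₀def
  have hfix : T φ₀ = φ₀ := hcontr.fixedPoint_isFixedPt
  have hfeq : ∀ (p : ℝ × ℝ) (hp : p ∈ E), ext φ₀ p = Traw (ext φ₀) p := by
    intro p hp
    rw [hexteq φ₀ p hp]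
    conv_lhs => rw [← hfix]
    simp only [hTdef, ContinuousMap.coe_mk]
  -- boundary values of the fixed point
  have hbcq : ∀ (α : Fin (n + 1)) (b : ℝ), b ∈ Icc (y 0) (y (Fin.last m)) →
      ext φ₀ (x α, b) = q α b := by
    intro α b hb
    have hp : (x α, b) ∈ E := ⟨hxm α, hb⟩
    rw [hfeq _ hp]
    show F (ix (x α)) (iy b) (ext φ₀) (x α, b) = q α b
    exact hTbcq _ _ _ α b (hix (x α) (hxm α)) (hiy b hb)
  have hbcr : ∀ (β : Fin (m + 1)) (a : ℝ), a ∈ Icc (x 0) (x (Fin.last n)) →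
      ext φ₀ (a, y β) = r β a := by
    intro β a ha
    have hp : (a, y β) ∈ E := ⟨ha, hym β⟩
    rw [hfeq _ hp]
    show F (ix a) (iy (y β)) (ext φ₀) (a, y β) = r β a
    exact hTbcr _ _ _ β a (hix a ha) (hiy (y β) (hym β))
  -- the self-affinity functional equation for the fixed point
  have hfe : ∀ (i : Fin n) (j : Fin m) (p : ℝ × ℝ),
      p ∈ Icc (x i.castSucc) (x i.succ) ×ˢ Icc (y j.castSucc) (y j.succ) →
      ext φ₀ p = s i j p * (ext φ₀ (Lx' i p.1, Ly' j p.2) -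
        g i j (Lx' i p.1, Ly' j p.2)) + h i j p := by
    intro i j p hp
    have hpE : p ∈ E := ⟨hsubx i p.1 hp.1, hsuby j p.2 hp.2⟩
    rw [hfeq p hpE]
    show F (ix p.1) (iy p.2) (ext φ₀) p = _
    rw [hFagree (ext φ₀) (ix p.1) i (iy p.2) j p
      (hix p.1 (hsubx i p.1 hp.1)) (hiy p.2 (hsuby j p.2 hp.2)) hp.1 hp.2]
  refine ⟨ext φ₀, ⟨hextcont φ₀, hbcq, hbcr⟩, hfe, ?_, ?_⟩
  · intro α β
    rw [hbcq α (y β) (hym β)]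
    exact hqdata α β
  · rintro f' ⟨hc', hq', hr'⟩ hfe'
    set ψ : C(E, ℝ) := ⟨E.restrict f', continuousOn_iff_continuous_restrict.mp hc'⟩ with hψdef
    have hψfix : T ψ = ψ := by
      ext p
      obtain ⟨pp, hp⟩ := p
      simp only [hTdef, hψdef, ContinuousMap.coe_mk, Set.restrict_apply]
      have hia := hix pp.1 hp.1
      have hjb := hiy pp.2 hp.2
      have hw : (Lx' (ix pp.1) pp.1, Ly' (iy pp.2) pp.2) ∈ E :=
        ⟨hLx'map _ hia, hLy'map _ hjb⟩
      have hext' : ext ψ (Lx' (ix pp.1) pp.1, Ly' (iy pp.2) pp.2) =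
          f' (Lx' (ix pp.1) pp.1, Ly' (iy pp.2) pp.2) := by
        rw [hexteq ψ _ hw]
        rfl
      show F (ix pp.1) (iy pp.2) (ext ψ) pp = f' pp
      rw [hFdef]
      simp only
      rw [hext']
      exact (hfe' (ix pp.1) (iy pp.2) pp ⟨hia, hjb⟩).symm
    have hψeq : φ₀ = ψ := hφ₀def.trans (hcontr.fixedPoint_unique hψfix).symm
    intro p hp
    rw [hexteq φ₀ p hp, hψeq]
    rfl
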